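/- Let R be a commutative Artinian local ring of characteristic p, q = p^e, and r ≥ 1. Let t, g_1, …, g_{r−1}, g'_1, …, g'_{r−1} ∈ R, and set φ = tX + Σ_{i=1}^{r−1} g_i X^{q^i} + X^{q^r} and ψ = tX + Σ_{i=1}^{r−1} g'_i X^{q^i} + X^{q^r} in R[X]. If u ∈ R[X] is a q-polynomial that is a compositional unit and satisfies u∘φ = ψ∘u, then u = cX for some unit c of R with c^{q^r−1} = 1 and c·g_i = g'_i·c^{q^i} for every 1 ≤ i ≤ r−1. -/

import Mathlib

/-- A `q`-polynomial: all nonzero coefficients sit in degrees that are powers of `q`. -/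
def IsqPoly (q : ℕ) {R : Type*} [Semiring R] (f : Polynomial R) : Prop :=
  ∀ n ∈ f.support, ∃ i : ℕ, n = q ^ i

open Polynomial

/-- coefficient of a "q-sum" at `q^j` when `j ∈ s`. -/
lemma qsum_coeff_mem {R : Type*} [CommRing R] {q : ℕ} (hq : 2 ≤ q) (s : Finset ℕ)
    (b : ℕ → R) (j : ℕ) (hj : j ∈ s) :
    (∑ i ∈ s, C (b i) * X ^ q ^ i).coeff (q ^ j) = b j := by
  rw [finset_sum_coeff, Finset.sum_eq_single j]
  · simp
  · intro i hi hij
    have : q ^ j ≠ q ^ i := fun h => hij (Nat.pow_right_injective hq h).symm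
    simp [coeff_X_pow, this]
  · exact fun h => absurd hj h

lemma qsum_coeff_notmem {R : Type*} [CommRing R] {q : ℕ} (hq : 2 ≤ q) (s : Finset ℕ)
    (b : ℕ → R) (j : ℕ) (hj : ∀ i ∈ s, i ≠ j) :
    (∑ i ∈ s, C (b i) * X ^ q ^ i).coeff (q ^ j) = 0 := by
  rw [finset_sum_coeff]
  refine Finset.sum_eq_zero fun i hi => ?_
  have : q ^ j ≠ q ^ i := fun h => hj i hi (Nat.pow_right_injective hq h).symm
  simp [coeff_X_pow, this]

/-- facts about the shape polynomial. -/
lemma shape_deg {R : Type*} [CommRing R] [Nontrivial R] {q r : ℕ} (hq : 2 ≤ q) (hr : 1 ≤ r)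
    (t : R) (g : ℕ → R) :
    (C t * X + (∑ i ∈ Finset.Icc 1 (r - 1), C (g i) * X ^ q ^ i) + X ^ q ^ r).natDegree = q ^ r ∧
    (C t * X + (∑ i ∈ Finset.Icc 1 (r - 1), C (g i) * X ^ q ^ i) + X ^ q ^ r).Monic := by
  set s : Polynomial R := C t * X + ∑ i ∈ Finset.Icc 1 (r - 1), C (g i) * X ^ q ^ i with hs
  have h1 : (1:ℕ) < q ^ r := Nat.one_lt_pow (by omega) (by omega)
  have hnd : s.natDegree < q ^ r := by
    have h2 : (C t * X).natDegree < q ^ r := by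
      have := natDegree_C_mul_le t (X : Polynomial R)
      simpa using lt_of_le_of_lt (by simpa using this) h1
    have h3 : (∑ i ∈ Finset.Icc 1 (r - 1), C (g i) * X ^ q ^ i).natDegree < q ^ r := by
      apply lt_of_le_of_lt (natDegree_sum_le _ _)
      rw [Finset.fold_max_lt]
      constructor
      · positivity
      · intro i hi
        simp only [Finset.mem_Icc] at hi
        calc (C (g i) * X ^ q ^ i).natDegree ≤ (X ^ q ^ i : Polynomial R).natDegree :=
              natDegree_C_mul_le (g i) (X ^ q ^ i)
          _ ≤ q ^ i := by simp [natDegree_X_pow]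
          _ < q ^ r := Nat.pow_lt_pow_right (by omega) (by omega)
    exact lt_of_le_of_lt (natDegree_add_le _ _) (max_lt h2 h3)
  have hdeg : s.degree < (q ^ r : ℕ) :=
    lt_of_le_of_lt degree_le_natDegree (by exact_mod_cast hnd)
  have hm : (X ^ q ^ r + s).Monic := monic_X_pow_add hdeg
  have hd : (X ^ q ^ r + s : Polynomial R).degree = ((q ^ r : ℕ) : WithBot ℕ) := by
    rw [degree_add_eq_left_of_degree_lt (by simpa [degree_X_pow] using hdeg)]
    exact degree_X_pow _
  rw [show C t * X + (∑ i ∈ Finset.Icc 1 (r - 1), C (g i) * X ^ q ^ i) + X ^ q ^ r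
      = X ^ q ^ r + s from by rw [hs]; ring]
  exact ⟨natDegree_eq_of_degree_eq_some hd, hm⟩

open Polynomial in
/-- Rigidity of isomorphisms between normalized rank-`r` Drinfeld modules over an Artinian
local ring: any `q`-polynomial compositional unit `u` with `u ∘ φ = ψ ∘ u` is linear,
`u = cX`, with `c` a unit satisfying `c^(q^r-1) = 1` and `c·gᵢ = gᵢ'·c^(qⁱ)`. -/
theorem stmt2 (p : ℕ) (hp : p.Prime) (e : ℕ) (he : 0 < e) (q : ℕ) (hq : q = p ^ e)
    (R : Type*) [CommRing R] [IsArtinianRing R] [IsLocalRing R] [CharP R p]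
    (r : ℕ) (hr : 1 ≤ r) (t : R) (g g' : ℕ → R)
    (φ ψ : Polynomial R)
    (hφ : φ = C t * X + (∑ i ∈ Finset.Icc 1 (r - 1), C (g i) * X ^ q ^ i) + X ^ q ^ r)
    (hψ : ψ = C t * X + (∑ i ∈ Finset.Icc 1 (r - 1), C (g' i) * X ^ q ^ i) + X ^ q ^ r)
    (u : Polynomial R) (hu : IsqPoly q u)
    (hunit : ∃ v : Polynomial R, IsqPoly q v ∧ u.comp v = X ∧ v.comp u = X)
    (hcomm : u.comp φ = ψ.comp u) :
    ∃ c : R, IsUnit c ∧ u = C c * X ∧ c ^ (q ^ r - 1) = 1 ∧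
      ∀ i ∈ Finset.Icc 1 (r - 1), c * g i = g' i * c ^ q ^ i := by
  obtain ⟨v, hv, huv, hvu⟩ := hunit
  have hq2 : 2 ≤ q := by
    subst hq
    calc 2 ≤ p := hp.two_le
      _ = p ^ 1 := (pow_one p).symm
      _ ≤ p ^ e := Nat.pow_le_pow_right hp.pos he
  have hqr1 : (1:ℕ) < q ^ r := Nat.one_lt_pow (by omega) (by omega)
  have hu0 : u ≠ 0 := by
    intro h
    rw [h, zero_comp] at huv
    exact X_ne_zero huv.symm
  obtain ⟨n, hn⟩ := hu u.natDegree (natDegree_mem_support_of_nonzero hu0)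
  obtain ⟨hφd, hφm⟩ := shape_deg (R := R) hq2 hr t g
  obtain ⟨hψd, hψm⟩ := shape_deg (R := R) hq2 hr t g'
  rw [← hφ] at hφd hφm
  rw [← hψ] at hψd hψm
  -- Step 1: natDegree u = 1
  have hdeg1 : u.natDegree = 1 := by
    by_contra hne
    have hn1 : 1 ≤ n := by
      rcases Nat.eq_zero_or_pos n with h | h
      · exact absurd (by rw [hn, h, pow_zero]) hne
      · exact h
    have hnd0 : u.natDegree ≠ 0 := by
      rw [hn]; positivity
    set a := u.leadingCoeff with ha
    have ha0 : a ≠ 0 := leadingCoeff_ne_zero.mpr hu0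
    -- a = a ^ q^r from comparing top coefficients
    have key : a = a ^ q ^ r := by
      have c1 : (u.comp φ).coeff (u.natDegree * φ.natDegree) = a := by
        rw [coeff_comp_degree_mul_degree (by rw [hφd]; omega), hφm.leadingCoeff, one_pow, mul_one]
      have c2 : (ψ.comp u).coeff (ψ.natDegree * u.natDegree) = a ^ q ^ r := by
        rw [coeff_comp_degree_mul_degree hnd0, hψm.leadingCoeff, one_mul, hψd]
      have hdd : u.natDegree * φ.natDegree = ψ.natDegree * u.natDegree := by
        rw [hφd, hψd, mul_comm]
      conv_lhs => rw [← c1, hcomm, hdd, c2]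
    -- a is in the maximal ideal
    have hmem : a ∈ IsLocalRing.maximalIdeal R := by
      set f := IsLocalRing.residue R with hf
      have hmapcomp : (u.map f).comp (v.map f) = X := by
        rw [← map_comp, huv, map_X]
      have hndmap : (u.map f).natDegree = 1 := by
        have := natDegree_comp (p := u.map f) (q := v.map f)
        rw [hmapcomp, natDegree_X] at this
        exact Nat.eq_one_of_mul_eq_one_right this.symm
      have hlt : (u.map f).natDegree < u.natDegree := by
        rw [hndmap, hn]
        calc 1 < q := by omega
          _ = q ^ 1 := (pow_one q).symm
          _ ≤ q ^ n := Nat.pow_le_pow_right (by omega) hn1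
      have : (u.map f).coeff u.natDegree = 0 := coeff_eq_zero_of_natDegree_lt hlt
      rw [coeff_map] at this
      exact (IsLocalRing.residue_eq_zero_iff a).mp this
    -- a is nilpotent
    have hnil : IsNilpotent a := by
      obtain ⟨k, hk⟩ := IsArtinianRing.isNilpotent_jacobson_bot (R := R)
      refine ⟨k, ?_⟩
      have : a ^ k ∈ (Ideal.jacobson (⊥ : Ideal R)) ^ k :=
        Ideal.pow_mem_pow (by rwa [IsLocalRing.jacobson_eq_maximalIdeal ⊥ bot_ne_top]) k
      rw [hk] at this
      simpa using this
    obtain ⟨N, hN⟩ := hnil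
    -- iterate a = a^(q^r)^m
    have hiter : ∀ m : ℕ, a = a ^ (q ^ r) ^ m := by
      intro m
      induction m with
      | zero => simp
      | succ m ih =>
        calc a = a ^ q ^ r := key
          _ = (a ^ (q ^ r) ^ m) ^ q ^ r := by rw [← ih]
          _ = a ^ (q ^ r) ^ (m + 1) := by rw [← pow_mul, pow_succ]
    have hbig : N ≤ (q ^ r) ^ N := Nat.le_of_lt (Nat.lt_pow_self (n := N) (by omega))
    have : a = 0 := by
      have := hiter N
      rwa [← Nat.sub_add_cancel hbig, pow_add, hN, mul_zero] at this
    exact ha0 this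
  -- Step 2: u = C c * X
  have hc0 : u.coeff 0 = 0 := by
    by_contra h
    obtain ⟨i, hi⟩ := hu 0 (mem_support_iff.mpr h)
    have : 0 < q ^ i := by positivity
    omega
  set c := u.coeff 1 with hc
  have hueq : u = C c * X := by
    have := eq_X_add_C_of_degree_le_one (p := u)
      (by rw [degree_eq_natDegree hu0, hdeg1]; exact le_refl _)
    rw [hc0, map_zero, add_zero] at this
    exact this
  -- Step 3: c is a unit
  have hcunit : IsUnit c := by
    have : C c * v = X := by
      rw [← huv, hueq, mul_comp, C_comp, X_comp]
    have h1 : c * v.coeff 1 = 1 := by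
      have := congrArg (fun P => P.coeff 1) this
      simpa [coeff_C_mul] using this
    exact IsUnit.of_mul_eq_one _ h1
  -- Step 4: rewrite hcomm into canonical forms
  have hL : u.comp φ = C (c * t) * X + (∑ i ∈ Finset.Icc 1 (r - 1), C (c * g i) * X ^ q ^ i)
      + C c * X ^ q ^ r := by
    rw [hueq, hφ, mul_comp, C_comp, X_comp]
    rw [mul_add, mul_add, Finset.mul_sum]
    congr 1
    · congr 1
      · rw [map_mul]; ring
      · exact Finset.sum_congr rfl fun i _ => by rw [map_mul]; ring
  have hR : ψ.comp u = C (t * c) * X + (∑ i ∈ Finset.Icc 1 (r - 1),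
      C (g' i * c ^ q ^ i) * X ^ q ^ i) + C (c ^ q ^ r) * X ^ q ^ r := by
    rw [hueq, hψ, add_comp, add_comp, mul_comp, C_comp, X_comp, sum_comp, pow_comp, X_comp]
    congr 1
    · congr 1
      · rw [map_mul]; ring
      · refine Finset.sum_congr rfl fun i _ => ?_
        rw [mul_comp, C_comp, pow_comp, X_comp, mul_pow, ← map_pow, map_mul]
        ring
    · rw [mul_pow, ← map_pow]
  rw [hL, hR] at hcomm
  -- coefficient at q^r : c = c^(q^r)
  have hcr : c = c ^ q ^ r := by
    have := congrArg (fun P => P.coeff (q ^ r)) hcomm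
    simp only [coeff_add, coeff_C_mul] at this
    rw [qsum_coeff_notmem hq2 _ _ r (fun i hi => by simp only [Finset.mem_Icc] at hi; omega),
        qsum_coeff_notmem hq2 _ _ r (fun i hi => by simp only [Finset.mem_Icc] at hi; omega)]
      at this
    have hx : (X : Polynomial R).coeff (q ^ r) = 0 := by
      rw [coeff_X]; exact if_neg (by omega)
    rw [hx] at this
    simpa [coeff_X_pow] using this
  have hpow : c ^ (q ^ r - 1) = 1 := by
    have h1 : c * c ^ (q ^ r - 1) = c * 1 := by
      rw [mul_one, ← pow_succ']
      rw [Nat.sub_add_cancel (by omega)]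
      exact hcr.symm
    exact hcunit.mul_left_cancel h1
  refine ⟨c, hcunit, hueq, hpow, ?_⟩
  intro j hj
  have hj1 : 1 ≤ j ∧ j ≤ r - 1 := Finset.mem_Icc.mp hj
  have := congrArg (fun P => P.coeff (q ^ j)) hcomm
  simp only [coeff_add, coeff_C_mul] at this
  rw [qsum_coeff_mem hq2 _ _ j hj, qsum_coeff_mem hq2 _ _ j hj] at this
  have hx : (X : Polynomial R).coeff (q ^ j) = 0 := by
    rw [coeff_X]
    refine if_neg ?_
    have : q ≤ q ^ j := by
      calc q = q ^ 1 := (pow_one q).symm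
        _ ≤ q ^ j := Nat.pow_le_pow_right (by omega) hj1.1
    omega
  have hxr : (X ^ q ^ r : Polynomial R).coeff (q ^ j) = 0 := by
    rw [coeff_X_pow]
    refine if_neg ?_
    intro h
    have := Nat.pow_right_injective hq2 h
    omega
  rw [hx, hxr] at this
  simpa using this
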